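/- Fix an integer k ≥ 0 and a real number t > 0. Set H_k := ∑_{ℓ=1}^{k} 1/ℓ, H'_k := ∑_{ℓ=1}^{k} 1/ℓ², G_k := H_{2k} − H_k, and G̃_k := 8G_k² − 2H'_{2k} + H'_k + π²/6. Define f(s) := Γ(2k + 2s + 1)⁴ / (Γ(k + s + 1)⁸ · (k + s + 1/2)) · t^{k+s} for real s near 0 (Γ denotes the real Gamma function). Then f is twice differentiable at 0 and f''(0) = binom(2k,k)⁴ · t^k / (k + 1/2) · ( 8G̃_k − 16G_k/(k + 1/2) + 2/(k + 1/2)² + (16G_k − 2/(k + 1/2))·log t + (log t)² ). -/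

import Mathlib

open Real Filter Set


/-- `H_k = ∑_{ℓ=1}^k 1/ℓ`. -/
noncomputable def Hsum (k : ℕ) : ℝ := ∑ ℓ ∈ Finset.Icc 1 k, (1 : ℝ) / ℓ

/-- `H'_k = ∑_{ℓ=1}^k 1/ℓ²`. -/
noncomputable def Hsum' (k : ℕ) : ℝ := ∑ ℓ ∈ Finset.Icc 1 k, (1 : ℝ) / (ℓ : ℝ) ^ 2

/-- `G_k = H_{2k} − H_k`. -/
noncomputable def Gk (k : ℕ) : ℝ := Hsum (2 * k) - Hsum k

/-- `G̃_k = 8G_k² − 2H'_{2k} + H'_k + π²/6`. -/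
noncomputable def Gtilde (k : ℕ) : ℝ :=
  8 * Gk k ^ 2 - 2 * Hsum' (2 * k) + Hsum' k + Real.pi ^ 2 / 6

/-- `f(s) = Γ(2k+2s+1)⁴ / (Γ(k+s+1)⁸·(k+s+1/2)) · t^{k+s}`. -/
noncomputable def f17 (k : ℕ) (t : ℝ) : ℝ → ℝ := fun s =>
  Real.Gamma (2 * (k : ℝ) + 2 * s + 1) ^ 4 /
      (Real.Gamma ((k : ℝ) + s + 1) ^ 8 * ((k : ℝ) + s + 1 / 2)) *
    t ^ ((k : ℝ) + s)


-- Step 1: Gamma smooth at positive points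
lemma gamma_contDiffAt {x : ℝ} (hx : 0 < x) (n : ℕ) : ContDiffAt ℝ n Real.Gamma x := by
  have hU : IsOpen {z : ℂ | 0 < z.re} := isOpen_lt continuous_const Complex.continuous_re
  have hdiff : DifferentiableOn ℂ Complex.Gamma {z : ℂ | 0 < z.re} := by
    intro z hz
    refine (Complex.differentiableAt_Gamma z fun m => ?_).differentiableWithinAt
    intro h
    rw [h] at hz
    simp only [mem_setOf_eq, Complex.neg_re, Complex.natCast_re] at hz
    have : (0:ℝ) ≤ (m:ℝ) := Nat.cast_nonneg m
    linarith
  have han : AnalyticAt ℂ Complex.Gamma (x : ℂ) :=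
    hdiff.analyticAt (hU.mem_nhds (by simpa using hx))
  have h1 : ContDiffAt ℝ n (fun y : ℝ => (Complex.Gamma (y : ℂ)).re) x := by
    have h2 : ContDiffAt ℂ n Complex.Gamma (x : ℂ) := han.contDiffAt
    have h3 : ContDiffAt ℝ n Complex.Gamma (x : ℂ) := h2.restrict_scalars ℝ
    exact (Complex.reCLM.contDiff.contDiffAt).comp x
      (h3.comp x (Complex.ofRealCLM.contDiff.contDiffAt))
  have : (fun y : ℝ => (Complex.Gamma (y : ℂ)).re) = Real.Gamma := by
    funext y; rw [Complex.Gamma_ofReal]; simp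
  rwa [this] at h1

noncomputable def LG : ℝ → ℝ := fun x => Real.log (Real.Gamma x)
noncomputable def psi : ℝ → ℝ := deriv LG
noncomputable def psi2 : ℝ → ℝ := deriv psi

lemma contDiffAt_deriv_of {f : ℝ → ℝ} {x : ℝ} {n : ℕ}
    (h : ContDiffAt ℝ (n+1) f x) : ContDiffAt ℝ n (deriv f) x := by
  have h1 : ContDiffAt ℝ n (fderiv ℝ f) x := h.fderiv_right (by norm_cast)
  have h2 : ContDiffAt ℝ n (fun y => fderiv ℝ f y 1) x := h1.clm_apply contDiffAt_const
  have : (fun y => fderiv ℝ f y 1) = deriv f := by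
    funext y; exact fderiv_apply_one_eq_deriv
  rwa [this] at h2

lemma LG_contDiffAt {x : ℝ} (hx : 0 < x) (n : ℕ) : ContDiffAt ℝ n LG x :=
  (gamma_contDiffAt hx n).log (Real.Gamma_pos_of_pos hx).ne'

lemma psi_contDiffAt {x : ℝ} (hx : 0 < x) (n : ℕ) : ContDiffAt ℝ n psi x :=
  contDiffAt_deriv_of (LG_contDiffAt hx (n+1))

lemma LG_hasDerivAt {x : ℝ} (hx : 0 < x) : HasDerivAt LG (psi x) x :=
  ((LG_contDiffAt hx 1).differentiableAt (by norm_num)).hasDerivAt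

lemma psi_hasDerivAt {x : ℝ} (hx : 0 < x) : HasDerivAt psi (psi2 x) x :=
  ((psi_contDiffAt hx 1).differentiableAt (by norm_num)).hasDerivAt

lemma LG_rec {x : ℝ} (hx : 0 < x) : LG (x + 1) = Real.log x + LG x := by
  unfold LG
  rw [Real.Gamma_add_one hx.ne', Real.log_mul hx.ne' (Real.Gamma_pos_of_pos hx).ne']

lemma psi_rec {x : ℝ} (hx : 0 < x) : psi (x + 1) = 1 / x + psi x := by
  have hev : (fun y => LG (y + 1)) =ᶠ[nhds x] fun y => Real.log y + LG y := by
    filter_upwards [eventually_gt_nhds hx] with y hy using LG_rec hy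
  have h1 : deriv (fun y => LG (y + 1)) x = psi (x + 1) := by
    have := ((LG_hasDerivAt (by linarith : (0:ℝ) < x + 1)).comp x
      ((hasDerivAt_id x).add_const 1))
    simpa [Function.comp_def] using this.deriv
  have h2 : deriv (fun y => Real.log y + LG y) x = 1 / x + psi x := by
    have := ((Real.hasDerivAt_log hx.ne').add (LG_hasDerivAt hx)).deriv
    show deriv (Real.log + LG) x = _
    rw [this]; rw [one_div]
  rw [← h1, hev.deriv_eq, h2]

lemma psi2_rec {x : ℝ} (hx : 0 < x) : psi2 (x + 1) = -(1 / x ^ 2) + psi2 x := by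
  have hev : (fun y => psi (y + 1)) =ᶠ[nhds x] fun y => 1 / y + psi y := by
    filter_upwards [eventually_gt_nhds hx] with y hy using psi_rec hy
  have h1 : deriv (fun y => psi (y + 1)) x = psi2 (x + 1) := by
    have := ((psi_hasDerivAt (by linarith : (0:ℝ) < x + 1)).comp x
      ((hasDerivAt_id x).add_const 1))
    simpa [Function.comp_def] using this.deriv
  have h2 : deriv (fun y => 1 / y + psi y) x = -(1 / x ^ 2) + psi2 x := by
    have hinv : HasDerivAt (fun y : ℝ => 1 / y) (-(1 / x ^ 2)) x := by
      simpa [one_div] using (hasDerivAt_inv hx.ne')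
    exact (hinv.add (psi_hasDerivAt hx)).deriv
  rw [← h1, hev.deriv_eq, h2]

lemma psi_nat (n : ℕ) : psi ((n : ℝ) + 1) = psi 1 + Hsum n := by
  induction n with
  | zero => simp [Hsum]
  | succ m ih =>
    have hm : (0:ℝ) < (m:ℝ) + 1 := by positivity
    have : ((m+1 : ℕ) : ℝ) + 1 = ((m:ℝ) + 1) + 1 := by push_cast; ring
    have hH : Hsum (m+1) = Hsum m + 1/((m:ℝ)+1) := by
      rw [Hsum, Hsum, Finset.sum_Icc_succ_top (by omega : 1 ≤ m + 1)]; push_cast; ring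
    rw [this, psi_rec hm, ih, hH]; ring

lemma psi2_nat (n : ℕ) : psi2 ((n : ℝ) + 1) = psi2 1 - Hsum' n := by
  induction n with
  | zero => simp [Hsum']
  | succ m ih =>
    have hm : (0:ℝ) < (m:ℝ) + 1 := by positivity
    have : ((m+1 : ℕ) : ℝ) + 1 = ((m:ℝ) + 1) + 1 := by push_cast; ring
    have hH : Hsum' (m+1) = Hsum' m + 1/((m:ℝ)+1)^2 := by
      rw [Hsum', Hsum', Finset.sum_Icc_succ_top (by omega : 1 ≤ m + 1)]; push_cast; ring
    rw [this, psi2_rec hm, ih, hH]; ring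

lemma hasDerivAt_pix (s : ℝ) : HasDerivAt (fun y : ℝ => π * y) π s := by
  simpa using (hasDerivAt_id s).const_mul π

lemma hasDerivAt_sin_pix (s : ℝ) :
    HasDerivAt (fun y : ℝ => Real.sin (π * y)) (π * Real.cos (π * s)) s := by
  have := (Real.hasDerivAt_sin (π * s)).comp s (hasDerivAt_pix s)
  simpa [Function.comp_def, mul_comm] using this

lemma hasDerivAt_cos_pix (s : ℝ) :
    HasDerivAt (fun y : ℝ => Real.cos (π * y)) (-(π * Real.sin (π * s))) s := by
  have := (Real.hasDerivAt_cos (π * s)).comp s (hasDerivAt_pix s)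
  simpa [Function.comp_def, mul_comm] using this

lemma sin_pos_Ioo {s : ℝ} (hs : s ∈ Ioo (0:ℝ) 1) : 0 < Real.sin (π * s) :=
  Real.sin_pos_of_pos_of_lt_pi (by nlinarith [Real.pi_pos, hs.1])
    (by nlinarith [Real.pi_pos, hs.2])

lemma refl_LG {s : ℝ} (hs : s ∈ Ioo (0:ℝ) 1) :
    LG s + LG (1 - s) = Real.log π - Real.log (Real.sin (π * s)) := by
  have h1 : 0 < s := hs.1
  have h2 : 0 < 1 - s := by linarith [hs.2]
  have hsin := sin_pos_Ioo hs
  have := Real.Gamma_mul_Gamma_one_sub s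
  unfold LG
  rw [← Real.log_mul (Real.Gamma_pos_of_pos h1).ne' (Real.Gamma_pos_of_pos h2).ne', this,
    Real.log_div Real.pi_pos.ne' hsin.ne']

lemma refl_psi {s : ℝ} (hs : s ∈ Ioo (0:ℝ) 1) :
    psi s - psi (1 - s) = -(π * Real.cos (π * s) / Real.sin (π * s)) := by
  have h1 : 0 < s := hs.1
  have h2 : 0 < 1 - s := by linarith [hs.2]
  have hsin := sin_pos_Ioo hs
  have hev : (fun y => LG y + LG (1 - y)) =ᶠ[nhds s]
      fun y => Real.log π - Real.log (Real.sin (π * y)) := by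
    filter_upwards [(isOpen_Ioo).eventually_mem hs] with y hy using refl_LG hy
  have hL : HasDerivAt (fun y => LG y + LG (1 - y)) (psi s - psi (1 - s)) s := by
    have hc : HasDerivAt (fun y : ℝ => 1 - y) (-1) s := (hasDerivAt_id s).const_sub 1
    have h3 := ((LG_hasDerivAt h2).comp s hc)
    have h := (LG_hasDerivAt h1).add h3
    exact h.congr_deriv (by ring)
  have hR : HasDerivAt (fun y => Real.log π - Real.log (Real.sin (π * y)))
      (-(π * Real.cos (π * s) / Real.sin (π * s))) s := by
    have hlog := (Real.hasDerivAt_log hsin.ne').comp s (hasDerivAt_sin_pix s)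
    have h := (hasDerivAt_const s (Real.log π)).sub hlog
    have heq : Real.log π - Real.log (Real.sin (π * s)) =
        Real.log π - Real.log (Real.sin (π * s)) := rfl
    refine h.congr_deriv ?_
    rw [div_eq_mul_inv]
    ring
  rw [← hL.deriv, hev.deriv_eq, hR.deriv]

lemma psi2_half : psi2 (1/2) = π ^ 2 / 2 := by
  have hmem : (1/2 : ℝ) ∈ Ioo (0:ℝ) 1 := by norm_num
  have hev : (fun y => psi y - psi (1 - y)) =ᶠ[nhds (1/2 : ℝ)]
      fun y => -(π * Real.cos (π * y) / Real.sin (π * y)) := by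
    filter_upwards [(isOpen_Ioo).eventually_mem hmem] with y hy using refl_psi hy
  have hL : HasDerivAt (fun y => psi y - psi (1 - y)) (2 * psi2 (1/2)) (1/2 : ℝ) := by
    have hc : HasDerivAt (fun y : ℝ => 1 - y) (-1) (1/2 : ℝ) := (hasDerivAt_id _).const_sub 1
    have h2 : HasDerivAt (fun y : ℝ => psi (1 - y)) (psi2 (1/2) * (-1)) (1/2 : ℝ) := by
      have h := (psi_hasDerivAt (by norm_num : (0:ℝ) < 1 - 1/2)).comp (1/2 : ℝ) hc
      have : (1 : ℝ) - 1/2 = 1/2 := by norm_num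
      rw [this] at h
      simpa [Function.comp_def] using h
    have h := (psi_hasDerivAt (by norm_num : (0:ℝ) < (1/2:ℝ))).sub h2
    refine h.congr_deriv ?_
    ring
  have hR : HasDerivAt (fun y => -(π * Real.cos (π * y) / Real.sin (π * y)))
      (π ^ 2) (1/2 : ℝ) := by
    have hu : HasDerivAt (fun y : ℝ => π * Real.cos (π * y))
        (π * -(π * Real.sin (π * (1/2)))) (1/2 : ℝ) := (hasDerivAt_cos_pix (1/2)).const_mul π
    have hvne : Real.sin (π * (1/2)) ≠ 0 := by
      rw [mul_one_div, Real.sin_pi_div_two]; norm_num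
    have h := (hu.div (hasDerivAt_sin_pix (1/2)) hvne).neg
    refine h.congr_deriv ?_
    rw [mul_one_div, Real.sin_pi_div_two, Real.cos_pi_div_two]
    ring
  have hde := hev.deriv_eq
  rw [hL.deriv, hR.deriv] at hde
  linarith

lemma hasDerivAt_comp_add_const (f : ℝ → ℝ) {d : ℝ} {x : ℝ} (c : ℝ)
    (h : HasDerivAt f d (x + c)) : HasDerivAt (fun y => f (y + c)) d x := by
  have := h.comp x ((hasDerivAt_id x).add_const c)
  simpa [Function.comp_def] using this

lemma hasDerivAt_comp_two_mul (f : ℝ → ℝ) {d x : ℝ}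
    (h : HasDerivAt f d (2*x)) : HasDerivAt (fun y => f (2*y)) (2*d) x := by
  have hm : HasDerivAt (fun y : ℝ => 2*y) 2 x := by
    simpa using (hasDerivAt_id x).const_mul (2:ℝ)
  have := h.comp x hm
  simpa [Function.comp_def, mul_comm] using this

lemma dup_LG {s : ℝ} (hs : 0 < s) :
    LG s + LG (s + 1/2) = LG (2*s) + (1 - 2*s) * Real.log 2 + Real.log (Real.sqrt π) := by
  have h1 : (0:ℝ) < s + 1/2 := by linarith
  have h2 : (0:ℝ) < 2*s := by linarith
  have hdup := Real.Gamma_mul_Gamma_add_half s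
  unfold LG
  rw [← Real.log_mul (Real.Gamma_pos_of_pos hs).ne' (Real.Gamma_pos_of_pos h1).ne', hdup,
    Real.log_mul (by positivity) (Real.sqrt_pos.mpr Real.pi_pos).ne',
    Real.log_mul (Real.Gamma_pos_of_pos h2).ne' (by positivity),
    Real.log_rpow (by norm_num : (0:ℝ) < 2)]

lemma dup_psi {s : ℝ} (hs : 0 < s) :
    psi s + psi (s + 1/2) = 2 * psi (2*s) - 2 * Real.log 2 := by
  have h1 : (0:ℝ) < s + 1/2 := by linarith
  have h2 : (0:ℝ) < 2*s := by linarith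
  have hev : (fun y => LG y + LG (y + 1/2)) =ᶠ[nhds s]
      fun y => LG (2*y) + (1 - 2*y) * Real.log 2 + Real.log (Real.sqrt π) := by
    filter_upwards [eventually_gt_nhds hs] with y hy using dup_LG hy
  have hL : HasDerivAt (fun y => LG y + LG (y + 1/2)) (psi s + psi (s + 1/2)) s :=
    (LG_hasDerivAt hs).add (hasDerivAt_comp_add_const LG (1/2) (LG_hasDerivAt h1))
  have hR : HasDerivAt (fun y => LG (2*y) + (1 - 2*y) * Real.log 2 + Real.log (Real.sqrt π))
      (2 * psi (2*s) - 2 * Real.log 2) s := by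
    have h3 : HasDerivAt (fun y : ℝ => LG (2*y)) (2 * psi (2*s)) s :=
      hasDerivAt_comp_two_mul LG (LG_hasDerivAt h2)
    have h4 : HasDerivAt (fun y : ℝ => (1 - 2*y) * Real.log 2) (-(2 * Real.log 2)) s := by
      have h5 : HasDerivAt (fun y : ℝ => 1 - 2*y) (-2) s := by
        have hm : HasDerivAt (fun y : ℝ => 2*y) 2 s := by
          simpa using (hasDerivAt_id s).const_mul (2:ℝ)
        exact ((hasDerivAt_const s (1:ℝ)).sub hm).congr_deriv (by norm_num)
      have := h5.mul_const (Real.log 2)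
      simpa using this
    have h := (h3.add h4).add_const (Real.log (Real.sqrt π))
    simpa [sub_eq_add_neg] using h
  rw [← hL.deriv, hev.deriv_eq, hR.deriv]

lemma psi2_one : psi2 1 = π ^ 2 / 6 := by
  have hev : (fun y => psi y + psi (y + 1/2)) =ᶠ[nhds (1/2 : ℝ)]
      fun y => 2 * psi (2*y) - 2 * Real.log 2 := by
    filter_upwards [eventually_gt_nhds (by norm_num : (0:ℝ) < 1/2)] with y hy using dup_psi hy
  have hL : HasDerivAt (fun y => psi y + psi (y + 1/2))
      (psi2 (1/2) + psi2 1) (1/2 : ℝ) := by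
    have h1 : HasDerivAt (fun y : ℝ => psi (y + 1/2)) (psi2 1) (1/2 : ℝ) := by
      have h := hasDerivAt_comp_add_const psi (1/2)
        (x := (1/2:ℝ)) (by
          have he : (1:ℝ)/2 + 1/2 = 1 := by norm_num
          rw [he]
          exact psi_hasDerivAt (by norm_num))
      exact h
    exact (psi_hasDerivAt (by norm_num : (0:ℝ) < (1/2:ℝ))).add h1
  have hR : HasDerivAt (fun y => 2 * psi (2*y) - 2 * Real.log 2)
      (4 * psi2 1) (1/2 : ℝ) := by
    have h3 : HasDerivAt (fun y : ℝ => psi (2*y)) (2 * psi2 1) (1/2 : ℝ) := by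
      have h := hasDerivAt_comp_two_mul psi (x := (1/2:ℝ)) (by
        have he : 2 * (1/2:ℝ) = 1 := by norm_num
        rw [he]
        exact psi_hasDerivAt (by norm_num))
      exact h
    have h := (h3.const_mul 2).sub_const (2 * Real.log 2)
    have hv : 2 * (2 * psi2 1) = 4 * psi2 1 := by ring
    rw [hv] at h
    exact h
  have hde := hev.deriv_eq
  rw [hL.deriv, hR.deriv, psi2_half] at hde
  linarith

theorem stmt17 (k : ℕ) (t : ℝ) (ht : 0 < t) :
    DifferentiableAt ℝ (f17 k t) 0 ∧
    DifferentiableAt ℝ (deriv (f17 k t)) 0 ∧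
    iteratedDeriv 2 (f17 k t) 0 =
      (Nat.choose (2 * k) k : ℝ) ^ 4 * t ^ k / ((k : ℝ) + 1 / 2) *
        (8 * Gtilde k - 16 * Gk k / ((k : ℝ) + 1 / 2) + 2 / ((k : ℝ) + 1 / 2) ^ 2 +
          (16 * Gk k - 2 / ((k : ℝ) + 1 / 2)) * Real.log t + Real.log t ^ 2) := by
  set K := (k : ℝ) with hK
  have hK0 : 0 ≤ K := Nat.cast_nonneg k
  set F : ℝ → ℝ := fun s => 4 * LG (2*K + 2*s + 1) - 8 * LG (K + s + 1)
      - Real.log (K + s + 1/2) + (K + s) * Real.log t with hF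
  set F1 : ℝ → ℝ := fun s => 8 * psi (2*K + 2*s + 1) - 8 * psi (K + s + 1)
      - 1/(K + s + 1/2) + Real.log t with hF1
  set F2 : ℝ → ℝ := fun s => 16 * psi2 (2*K + 2*s + 1) - 8 * psi2 (K + s + 1)
      + 1/(K + s + 1/2)^2 with hF2
  set I : Set ℝ := Ioo (-(1/2) : ℝ) (1/2) with hIdef
  have hI0 : (0:ℝ) ∈ I := by constructor <;> norm_num
  have hInhds : I ∈ nhds (0:ℝ) := isOpen_Ioo.mem_nhds hI0
  -- positivity facts
  have hpos : ∀ s ∈ I, 0 < 2*K + 2*s + 1 ∧ 0 < K + s + 1 ∧ 0 < K + s + 1/2 := by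
    intro s hs
    obtain ⟨h1, h2⟩ := hs
    refine ⟨by linarith, by linarith, by linarith⟩
  -- f17 = exp ∘ F on I
  have hfF : ∀ s ∈ I, f17 k t s = Real.exp (F s) := by
    intro s hs
    obtain ⟨ha, hb, hc⟩ := hpos s hs
    have hGa := Real.Gamma_pos_of_pos ha
    have hGb := Real.Gamma_pos_of_pos hb
    have hfpos : 0 < f17 k t s := by
      unfold f17
      have := Real.rpow_pos_of_pos ht (K + s)
      positivity
    have hlog : Real.log (f17 k t s) = F s := by
      unfold f17
      rw [Real.log_mul (by positivity) (Real.rpow_pos_of_pos ht _).ne',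
        Real.log_div (by positivity) (by positivity),
        Real.log_mul (by positivity) hc.ne',
        Real.log_pow, Real.log_pow, Real.log_rpow ht]
      simp only [hF, LG]
      push_cast
      ring
    rw [← hlog, Real.exp_log hfpos]
  -- derivatives
  have hFd : ∀ s ∈ I, HasDerivAt F (F1 s) s := by
    intro s hs
    obtain ⟨ha, hb, hc⟩ := hpos s hs
    have hua : HasDerivAt (fun y : ℝ => 2*K + 2*y + 1) 2 s := by
      simpa using (((hasDerivAt_id s).const_mul (2:ℝ)).const_add (2*K)).add_const 1
    have hub : HasDerivAt (fun y : ℝ => K + y + 1) 1 s := by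
      simpa using ((hasDerivAt_id s).const_add K).add_const 1
    have huc : HasDerivAt (fun y : ℝ => K + y + 1/2) 1 s := by
      simpa using ((hasDerivAt_id s).const_add K).add_const (1/2 : ℝ)
    have h1 : HasDerivAt (fun y => LG (2*K + 2*y + 1)) (psi (2*K + 2*s + 1) * 2) s := by
      have := (LG_hasDerivAt ha).comp s hua; exact this
    have h2 : HasDerivAt (fun y => LG (K + y + 1)) (psi (K + s + 1) * 1) s := by
      have := (LG_hasDerivAt hb).comp s hub; exact this
    have h3 : HasDerivAt (fun y => Real.log (K + y + 1/2)) ((K + s + 1/2)⁻¹ * 1) s := by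
      have := (Real.hasDerivAt_log hc.ne').comp s huc; exact this
    have h4 : HasDerivAt (fun y : ℝ => (K + y) * Real.log t) (Real.log t) s := by
      simpa using (((hasDerivAt_id s).const_add K).mul_const (Real.log t))
    have h := (((h1.const_mul 4).sub (h2.const_mul 8)).sub h3).add h4
    refine h.congr_deriv ?_
    simp only [hF1]
    rw [one_div]
    ring
  have hF1d : ∀ s ∈ I, HasDerivAt F1 (F2 s) s := by
    intro s hs
    obtain ⟨ha, hb, hc⟩ := hpos s hs
    have hua : HasDerivAt (fun y : ℝ => 2*K + 2*y + 1) 2 s := by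
      simpa using (((hasDerivAt_id s).const_mul (2:ℝ)).const_add (2*K)).add_const 1
    have hub : HasDerivAt (fun y : ℝ => K + y + 1) 1 s := by
      simpa using ((hasDerivAt_id s).const_add K).add_const 1
    have huc : HasDerivAt (fun y : ℝ => K + y + 1/2) 1 s := by
      simpa using ((hasDerivAt_id s).const_add K).add_const (1/2 : ℝ)
    have h1 : HasDerivAt (fun y => psi (2*K + 2*y + 1)) (psi2 (2*K + 2*s + 1) * 2) s :=
      (psi_hasDerivAt ha).comp s hua
    have h2 : HasDerivAt (fun y => psi (K + y + 1)) (psi2 (K + s + 1) * 1) s :=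
      (psi_hasDerivAt hb).comp s hub
    have h3 : HasDerivAt (fun y : ℝ => 1/(K + y + 1/2)) (-((K + s + 1/2)^2)⁻¹ * 1) s := by
      have := (hasDerivAt_inv hc.ne').comp s huc
      simpa [one_div, Function.comp_def] using this
    have h := (((h1.const_mul 8).sub (h2.const_mul 8)).sub h3).add_const (Real.log t)
    refine h.congr_deriv ?_
    simp only [hF2]
    rw [one_div]
    ring
  -- E = exp ∘ F
  have hEd : ∀ s ∈ I, HasDerivAt (fun y => Real.exp (F y)) (Real.exp (F s) * F1 s) s :=
    fun s hs => (hFd s hs).exp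
  have hfe : f17 k t =ᶠ[nhds 0] fun y => Real.exp (F y) := by
    filter_upwards [hInhds] with s hs using hfF s hs
  have hdiff1 : DifferentiableAt ℝ (f17 k t) 0 :=
    (Filter.EventuallyEq.differentiableAt_iff hfe).mpr (hEd 0 hI0).differentiableAt
  -- deriv f17 equals exp(F)·F1 on a neighborhood of 0
  have hderiv_ev : deriv (f17 k t) =ᶠ[nhds 0] fun s => Real.exp (F s) * F1 s := by
    filter_upwards [isOpen_Ioo.eventually_mem hI0] with s hs
    have hfe' : f17 k t =ᶠ[nhds s] fun y => Real.exp (F y) := by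
      filter_upwards [isOpen_Ioo.mem_nhds hs] with y hy using hfF y hy
    rw [hfe'.deriv_eq, (hEd s hs).deriv]
  have hDd : HasDerivAt (fun s => Real.exp (F s) * F1 s)
      (Real.exp (F 0) * F1 0 * F1 0 + Real.exp (F 0) * F2 0) 0 :=
    (hEd 0 hI0).mul (hF1d 0 hI0)
  have hdiff2 : DifferentiableAt ℝ (deriv (f17 k t)) 0 :=
    (Filter.EventuallyEq.differentiableAt_iff hderiv_ev).mpr hDd.differentiableAt
  refine ⟨hdiff1, hdiff2, ?_⟩
  have h2deriv : iteratedDeriv 2 (f17 k t) 0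
      = Real.exp (F 0) * F1 0 * F1 0 + Real.exp (F 0) * F2 0 := by
    rw [show (2:ℕ) = 1 + 1 from rfl, iteratedDeriv_succ, iteratedDeriv_one]
    rw [hderiv_ev.deriv_eq, hDd.deriv]
  rw [h2deriv]
  -- now evaluate F 0, F1 0, F2 0
  have harg_a : 2*K + 2*(0:ℝ) + 1 = ((2*k : ℕ) : ℝ) + 1 := by push_cast; ring
  have harg_b : K + (0:ℝ) + 1 = ((k : ℕ) : ℝ) + 1 := by push_cast; ring
  have hκ : (0:ℝ) < K + 1/2 := by linarith
  have hexpF0 : Real.exp (F 0) =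
      (Nat.choose (2 * k) k : ℝ) ^ 4 * t ^ k / (K + 1/2) := by
    have h0 : (0:ℝ) ∈ I := hI0
    rw [← hfF 0 h0]
    unfold f17
    rw [show 2*K + 2*(0:ℝ) + 1 = ((2*k : ℕ) : ℝ) + 1 by push_cast; ring,
      show K + (0:ℝ) + 1 = ((k : ℕ) : ℝ) + 1 by push_cast; ring,
      Real.Gamma_nat_eq_factorial, Real.Gamma_nat_eq_factorial,
      show K + (0:ℝ) = ((k:ℕ) : ℝ) by push_cast; ring, Real.rpow_natCast]
    have hfac : (Nat.factorial (2*k) : ℝ)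
        = (Nat.choose (2*k) k : ℝ) * (Nat.factorial k : ℝ) * (Nat.factorial k : ℝ) := by
      have h := Nat.choose_mul_factorial_mul_factorial (show k ≤ 2*k by omega)
      rw [show 2*k - k = k by omega] at h
      rw [← h]
      push_cast
      ring
    rw [hfac]
    have hkf : (0:ℝ) < (Nat.factorial k : ℝ) := by positivity
    field_simp
    ring
  have hF10 : F1 0 = 8 * Gk k - 1/(K + 1/2) + Real.log t := by
    simp only [hF1]
    rw [show 2*K + 2*(0:ℝ) + 1 = ((2*k : ℕ) : ℝ) + 1 by push_cast; ring,
      show K + (0:ℝ) + 1 = ((k : ℕ) : ℝ) + 1 by push_cast; ring,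
      psi_nat, psi_nat, show K + (0:ℝ) + 1/2 = K + 1/2 by ring]
    rw [Gk]
    ring
  have hF20 : F2 0 = 16 * (π^2/6 - Hsum' (2*k)) - 8 * (π^2/6 - Hsum' k) + 1/(K + 1/2)^2 := by
    simp only [hF2]
    rw [show 2*K + 2*(0:ℝ) + 1 = ((2*k : ℕ) : ℝ) + 1 by push_cast; ring,
      show K + (0:ℝ) + 1 = ((k : ℕ) : ℝ) + 1 by push_cast; ring,
      psi2_nat, psi2_nat, psi2_one, show K + (0:ℝ) + 1/2 = K + 1/2 by ring]
  rw [hexpF0, hF10, hF20, Gtilde, Gk]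
  have hκne : (K + 1/2) ≠ 0 := hκ.ne'
  field_simp
  ring
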